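/- Let n ≥ 6 and r ≥ 0, and let n-4 ≤ k ≤ n+r-4. Then HS_k(I(ACH_{n,r}^c)) does not have linear quotients. -/

import Mathlib

open Finset

/-- Edge relation of the graph `Hₙ` (one orientation). -/
def HE (n a b : ℕ) : Prop :=
  (1 ≤ a ∧ a ≤ n - 5 ∧ b = a + 1) ∨
  (a = n - 4 ∧ b = n - 2) ∨ (a = n - 2 ∧ b = n - 3) ∨
  (a = n - 1 ∧ 2 ≤ b ∧ b ≤ n ∧ b ≠ n - 1) ∨
  (a = n ∧ 1 ≤ b ∧ b ≤ n ∧ b ≠ n - 3 ∧ b ≠ n)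

/-- Edge relation of the graph `Hₙ` (symmetrized). -/
def Hedge (n a b : ℕ) : Prop := HE n a b ∨ HE n b a

def LHE (n r a b : ℕ) : Prop :=
  (n + 1 ≤ a ∧ a ≤ n + r ∧ 1 ≤ b ∧ b ≤ n ∧ b ≠ n - 3) ∨
  (n + 1 ≤ a ∧ a ≤ n + r ∧ n + 1 ≤ b ∧ b ≤ n + r ∧ a ≠ b)

/-- Edge relation of `LH_{n,r}`. -/
def LHedge (n r a b : ℕ) : Prop := Hedge n a b ∨ LHE n r a b ∨ LHE n r b a

/-- Edge relation of `CH_{n,r}`: a shifted copy of `Hₙ` on `{r+1,…,r+n}`,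
a clique on `{1,…,r}`, each clique vertex joined to `x_{r+n-1}` and `x_{r+n}`. -/
def CHedge (n r a b : ℕ) : Prop :=
  (r < a ∧ r < b ∧ Hedge n (a - r) (b - r)) ∨
  (1 ≤ a ∧ a ≤ r ∧ 1 ≤ b ∧ b ≤ r ∧ a ≠ b) ∨
  (1 ≤ a ∧ a ≤ r ∧ (b = r + n - 1 ∨ b = r + n)) ∨
  (1 ≤ b ∧ b ≤ r ∧ (a = r + n - 1 ∨ a = r + n))

/-- Edge relation of `ACH_{n,r}`: `CH_{n,r}` plus edges from `{1,…,r}` to `x_{r+n-2}`. -/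
def ACHedge (n r a b : ℕ) : Prop :=
  CHedge n r a b ∨ (1 ≤ a ∧ a ≤ r ∧ b = r + n - 2) ∨ (1 ≤ b ∧ b ≤ r ∧ a = r + n - 2)

/-- Minimal generators (as squarefree supports) of the `k`-th homological shift ideal
`HS_k(I(G^c))` of the edge ideal of the complement of a graph `G` with edge relation `E`
on vertex set `V`, whose natural order is a perfect elimination ordering
(Herzog–Moradi–Rahimbeigi–Zhu description). -/
def hsGens (E : ℕ → ℕ → Prop) (V : Finset ℕ) (k : ℕ) : Set (Finset ℕ) :=
  {h | h ⊆ V ∧ h.card = k + 2 ∧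
    ∃ t ∈ h, (∃ l ∈ h, t < l) ∧ ∀ l ∈ h, t < l → ¬ E t l}

/-- The successive-colon (linear quotients) condition for a given ordering of the
minimal generators of a squarefree monomial ideal generated in one degree. -/
def LQList (L : List (Finset ℕ)) : Prop :=
  ∀ i j : Fin L.length, i < j →
    ∃ p : Fin L.length, p < j ∧ ∃ v : ℕ,
      L.get p \ L.get j = {v} ∧ v ∈ L.get i \ L.get j

/-- A finite set of squarefree monomials (generators of an equigenerated monomial ideal)
has linear quotients: some linear order of the generators works. -/
def HasLQ (S : Set (Finset ℕ)) : Prop :=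
  ∃ L : List (Finset ℕ), L.Nodup ∧ (∀ h, h ∈ L ↔ h ∈ S) ∧ LQList L

/-- `g >_lex f` for squarefree monomials with variable order `x₁ > x₂ > ⋯`. -/
def lexGt (g f : Finset ℕ) : Prop :=
  List.Lex (· < ·) (g.sort (· ≤ ·)) (f.sort (· ≤ ·))

def fmax (h : Finset ℕ) : ℕ := h.sup id
noncomputable def fmin (h : Finset ℕ) : ℕ := sInf (↑h : Set ℕ)
def smax (h : Finset ℕ) : ℕ := (h.erase (fmax h)).sup id

/-- The natural order on vertices is a perfect elimination ordering. -/
def IsPEO (E : ℕ → ℕ → Prop) (V : Finset ℕ) : Prop :=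
  ∀ i ∈ V, ∀ j ∈ V, ∀ l ∈ V, i < j → i < l → j ≠ l → E i j → E i l → E j l

/-- A graph on `V` is chordal iff some relabeling of the vertices is a perfect
elimination ordering. -/
def ChordalOn (E : ℕ → ℕ → Prop) (V : Finset ℕ) : Prop :=
  ∃ π : ℕ → ℕ, Set.BijOn π ↑V ↑V ∧ IsPEO (fun a b => E (π a) (π b)) V


lemma triple_card {a b c : ℕ} (h1 : a < b) (h2 : b < c) :
    ({a, b, c} : Finset ℕ).card = 3 := by
  rw [card_insert_of_notMem (by simp; omega), card_pair (by omega)]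

section AdjFacts
variable (n r t l : ℕ)

lemma adj_cl2 (h1 : 1 ≤ t) (h2 : t ≤ r) : ACHedge n r t (r + n - 2) := by
  refine Or.inr (Or.inl ⟨?_, ?_, ?_⟩) <;> omega
lemma adj_cl1 (h1 : 1 ≤ t) (h2 : t ≤ r) : ACHedge n r t (r + n - 1) := by
  refine Or.inl (Or.inr (Or.inr (Or.inl ⟨?_, ?_, Or.inl ?_⟩))) <;> omega
lemma adj_cl0 (h1 : 1 ≤ t) (h2 : t ≤ r) : ACHedge n r t (r + n) := by
  refine Or.inl (Or.inr (Or.inr (Or.inl ⟨?_, ?_, Or.inr ?_⟩))) <;> omega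
lemma adj_11 (hn : 6 ≤ n) : ACHedge n r (r + 1) (r + 2) := by
  refine Or.inl (Or.inl ⟨?_, ?_, Or.inl (Or.inl ⟨?_, ?_, ?_⟩)⟩) <;> omega
lemma adj_10 (hn : 6 ≤ n) : ACHedge n r (r + 1) (r + n) := by
  refine Or.inl (Or.inl ⟨?_, ?_,
    Or.inr (Or.inr (Or.inr (Or.inr (Or.inr ⟨?_, ?_, ?_, ?_, ?_⟩))))⟩) <;> omega
lemma adj_mida (hn : 6 ≤ n) (h1 : r + 2 ≤ t) (h2 : t ≤ r + n - 5) :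
    ACHedge n r t (t + 1) := by
  refine Or.inl (Or.inl ⟨?_, ?_, Or.inl (Or.inl ⟨?_, ?_, ?_⟩)⟩) <;> omega
lemma adj_midb (hn : 6 ≤ n) (h1 : r + 2 ≤ t) (h2 : t ≤ r + n - 5) :
    ACHedge n r t (r + n - 1) := by
  refine Or.inl (Or.inl ⟨?_, ?_,
    Or.inr (Or.inr (Or.inr (Or.inr (Or.inl ⟨?_, ?_, ?_, ?_⟩))))⟩) <;> omega
lemma adj_midc (hn : 6 ≤ n) (h1 : r + 2 ≤ t) (h2 : t ≤ r + n - 5) :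
    ACHedge n r t (r + n) := by
  refine Or.inl (Or.inl ⟨?_, ?_,
    Or.inr (Or.inr (Or.inr (Or.inr (Or.inr ⟨?_, ?_, ?_, ?_, ?_⟩))))⟩) <;> omega
lemma adj_n4a (hn : 6 ≤ n) : ACHedge n r (r + n - 4) (r + n - 2) := by
  refine Or.inl (Or.inl ⟨?_, ?_, Or.inl (Or.inr (Or.inl ⟨?_, ?_⟩))⟩) <;> omega
lemma adj_n4b (hn : 6 ≤ n) : ACHedge n r (r + n - 4) (r + n - 1) := by
  refine Or.inl (Or.inl ⟨?_, ?_,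
    Or.inr (Or.inr (Or.inr (Or.inr (Or.inl ⟨?_, ?_, ?_, ?_⟩))))⟩) <;> omega
lemma adj_n4c (hn : 6 ≤ n) : ACHedge n r (r + n - 4) (r + n) := by
  refine Or.inl (Or.inl ⟨?_, ?_,
    Or.inr (Or.inr (Or.inr (Or.inr (Or.inr ⟨?_, ?_, ?_, ?_, ?_⟩))))⟩) <;> omega
lemma adj_n3a (hn : 6 ≤ n) : ACHedge n r (r + n - 3) (r + n - 2) := by
  refine Or.inl (Or.inl ⟨?_, ?_,
    Or.inr (Or.inr (Or.inr (Or.inl ⟨?_, ?_⟩)))⟩) <;> omega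
lemma adj_n3b (hn : 6 ≤ n) : ACHedge n r (r + n - 3) (r + n - 1) := by
  refine Or.inl (Or.inl ⟨?_, ?_,
    Or.inr (Or.inr (Or.inr (Or.inr (Or.inl ⟨?_, ?_, ?_, ?_⟩))))⟩) <;> omega
lemma adj_n2a (hn : 6 ≤ n) : ACHedge n r (r + n - 2) (r + n - 1) := by
  refine Or.inl (Or.inl ⟨?_, ?_,
    Or.inr (Or.inr (Or.inr (Or.inr (Or.inl ⟨?_, ?_, ?_, ?_⟩))))⟩) <;> omega
lemma adj_n2b (hn : 6 ≤ n) : ACHedge n r (r + n - 2) (r + n) := by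
  refine Or.inl (Or.inl ⟨?_, ?_,
    Or.inr (Or.inr (Or.inr (Or.inr (Or.inr ⟨?_, ?_, ?_, ?_, ?_⟩))))⟩) <;> omega
lemma adj_n1a (hn : 6 ≤ n) : ACHedge n r (r + n - 1) (r + n) := by
  refine Or.inl (Or.inl ⟨?_, ?_,
    Or.inl (Or.inr (Or.inr (Or.inr (Or.inl ⟨?_, ?_, ?_, ?_⟩))))⟩) <;> omega
lemma nonadj_f (hn : 6 ≤ n) : ¬ ACHedge n r (r + n - 3) (r + n) := by
  unfold ACHedge CHedge Hedge HE; omega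
lemma nonadj_g (hn : 6 ≤ n) (h1 : r + 3 ≤ l) (h2 : l ≤ r + n - 1) :
    ¬ ACHedge n r (r + 1) l := by
  unfold ACHedge CHedge Hedge HE; omega

end AdjFacts

set_option maxHeartbeats 1000000 in
/-- Characterization of the generators supported inside the window
`[r+n-(k+4)+1, r+n]`. -/
lemma hchar (n r k : ℕ) (hn : 6 ≤ n) (hkn : n ≤ k + 4) (hkr : k + 4 ≤ n + r)
    (h : Finset ℕ) (hW : h ⊆ Finset.Icc (r + n - (k + 4) + 1) (r + n))
    (hcard : h.card = k + 2)
    (hwit : ∃ t ∈ h, (∃ l ∈ h, t < l) ∧ ∀ l ∈ h, t < l → ¬ ACHedge n r t l) :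
    h = Finset.Icc (r + n - (k + 4) + 1) (r + n) \ {r + n - 2, r + n - 1} ∨
    h = Finset.Icc (r + n - (k + 4) + 1) (r + n) \ {r + 2, r + n} := by
  set s := r + n - (k + 4) with hs
  clear_value s
  have hsr : s ≤ r := by omega
  have hWcard : (Finset.Icc (s + 1) (r + n)).card = k + 4 := by
    rw [Nat.card_Icc]; omega
  have hsd : (Finset.Icc (s + 1) (r + n) \ h).card = 2 := by
    rw [card_sdiff_of_subset hW, hWcard, hcard]; omega
  obtain ⟨t, htm, ⟨l0, hl0, htl0⟩, hnon⟩ := hwit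
  have htW : s + 1 ≤ t ∧ t ≤ r + n := mem_Icc.mp (hW htm)
  have hl0W : s + 1 ≤ l0 ∧ l0 ≤ r + n := mem_Icc.mp (hW hl0)
  have key : ∀ v, s + 1 ≤ v → v ≤ r + n → t < v → ACHedge n r t v →
      v ∈ Finset.Icc (s + 1) (r + n) \ h := by
    intro v h1 h2 h3 h4
    rw [mem_sdiff, mem_Icc]
    exact ⟨⟨h1, h2⟩, fun hv => hnon v hv h3 h4⟩
  have hcases : t ≤ r ∨ t = r + 1 ∨ (r + 2 ≤ t ∧ t ≤ r + n - 5) ∨ t = r + n - 4 ∨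
      t = r + n - 3 ∨ t = r + n - 2 ∨ t = r + n - 1 ∨ t = r + n := by omega
  rcases hcases with hc | hc | hc | hc | hc | hc | hc | hc
  · -- clique vertex
    exfalso
    have hsub : ({r + n - 2, r + n - 1, r + n} : Finset ℕ) ⊆
        Finset.Icc (s + 1) (r + n) \ h := by
      intro x hx
      simp only [mem_insert, mem_singleton] at hx
      rcases hx with rfl | rfl | rfl
      · exact key _ (by omega) (by omega) (by omega) (adj_cl2 n r t (by omega) hc)
      · exact key _ (by omega) (by omega) (by omega) (adj_cl1 n r t (by omega) hc)
      · exact key _ (by omega) (by omega) (by omega) (adj_cl0 n r t (by omega) hc)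
    have := card_le_card hsub
    rw [hsd, triple_card (by omega) (by omega)] at this
    omega
  · -- t = r+1
    right
    subst hc
    have h1 : r + 2 ∈ Finset.Icc (s + 1) (r + n) \ h :=
      key _ (by omega) (by omega) (by omega) (adj_11 n r hn)
    have h2 : r + n ∈ Finset.Icc (s + 1) (r + n) \ h :=
      key _ (by omega) (by omega) (by omega) (adj_10 n r hn)
    have hsub : ({r + 2, r + n} : Finset ℕ) ⊆ Finset.Icc (s + 1) (r + n) \ h := by
      intro x hx
      simp only [mem_insert, mem_singleton] at hx
      rcases hx with rfl | rfl
      · exact h1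
      · exact h2
    have heq : ({r + 2, r + n} : Finset ℕ) = Finset.Icc (s + 1) (r + n) \ h :=
      eq_of_subset_of_card_le hsub (by rw [hsd, card_pair (by omega)])
    rw [heq]; exact (Finset.sdiff_sdiff_eq_self hW).symm
  · -- middle path vertex
    exfalso
    have hsub : ({t + 1, r + n - 1, r + n} : Finset ℕ) ⊆
        Finset.Icc (s + 1) (r + n) \ h := by
      intro x hx
      simp only [mem_insert, mem_singleton] at hx
      rcases hx with rfl | rfl | rfl
      · exact key _ (by omega) (by omega) (by omega) (adj_mida n r t hn hc.1 hc.2)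
      · exact key _ (by omega) (by omega) (by omega) (adj_midb n r t hn hc.1 hc.2)
      · exact key _ (by omega) (by omega) (by omega) (adj_midc n r t hn hc.1 hc.2)
    have := card_le_card hsub
    rw [hsd, triple_card (by omega) (by omega)] at this
    omega
  · -- t = r+n-4
    exfalso
    subst hc
    have hsub : ({r + n - 2, r + n - 1, r + n} : Finset ℕ) ⊆
        Finset.Icc (s + 1) (r + n) \ h := by
      intro x hx
      simp only [mem_insert, mem_singleton] at hx
      rcases hx with rfl | rfl | rfl
      · exact key _ (by omega) (by omega) (by omega) (adj_n4a n r hn)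
      · exact key _ (by omega) (by omega) (by omega) (adj_n4b n r hn)
      · exact key _ (by omega) (by omega) (by omega) (adj_n4c n r hn)
    have := card_le_card hsub
    rw [hsd, triple_card (by omega) (by omega)] at this
    omega
  · -- t = r+n-3
    left
    subst hc
    have h1 : r + n - 2 ∈ Finset.Icc (s + 1) (r + n) \ h :=
      key _ (by omega) (by omega) (by omega) (adj_n3a n r hn)
    have h2 : r + n - 1 ∈ Finset.Icc (s + 1) (r + n) \ h :=
      key _ (by omega) (by omega) (by omega) (adj_n3b n r hn)
    have hsub : ({r + n - 2, r + n - 1} : Finset ℕ) ⊆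
        Finset.Icc (s + 1) (r + n) \ h := by
      intro x hx
      simp only [mem_insert, mem_singleton] at hx
      rcases hx with rfl | rfl
      · exact h1
      · exact h2
    have heq : ({r + n - 2, r + n - 1} : Finset ℕ) = Finset.Icc (s + 1) (r + n) \ h :=
      eq_of_subset_of_card_le hsub (by rw [hsd, card_pair (by omega)])
    rw [heq]; exact (Finset.sdiff_sdiff_eq_self hW).symm
  · -- t = r+n-2
    exfalso
    subst hc
    rcases (by omega : l0 = r + n - 1 ∨ l0 = r + n) with rfl | rfl
    · exact hnon _ hl0 htl0 (adj_n2a n r hn)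
    · exact hnon _ hl0 htl0 (adj_n2b n r hn)
  · -- t = r+n-1
    exfalso
    subst hc
    have hl0e : l0 = r + n := by omega
    subst hl0e
    exact hnon _ hl0 htl0 (adj_n1a n r hn)
  · -- t = r+n
    exfalso; omega

lemma LQ_step (S : Set (Finset ℕ)) (W a b : Finset ℕ) (haW : a ⊆ W) (hbW : b ⊆ W)
    (huniq : ∀ h ∈ S, h ⊆ W → h = a ∨ h = b) (hab : (a \ b).card = 2)
    (L : List (Finset ℕ)) (hmem : ∀ h, h ∈ L ↔ h ∈ S) (hLQ : LQList L)
    (i j : Fin L.length) (hij : i < j) (ha : L.get i = a) (hb : L.get j = b) :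
    False := by
  obtain ⟨p, hpj, v, hpv, hvi⟩ := hLQ i j hij
  rw [ha, hb] at hvi
  rw [hb] at hpv
  have hvW : v ∈ W := haW (mem_sdiff.mp hvi).1
  have hpS : L.get p ∈ S := (hmem _).mp (L.get_mem p)
  have hpW : L.get p ⊆ W := by
    intro x hx
    by_cases hxb : x ∈ b
    · exact hbW hxb
    · have hxv : x ∈ L.get p \ b := mem_sdiff.mpr ⟨hx, hxb⟩
      rw [hpv, mem_singleton] at hxv
      subst hxv; exact hvW
  rcases huniq _ hpS hpW with hpa | hpb
  · rw [hpa] at hpv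
    rw [hpv] at hab
    simp at hab
  · rw [hpb, sdiff_self] at hpv
    exact (Finset.singleton_ne_empty v) hpv.symm

set_option maxHeartbeats 1000000 in
/-- For `n ≥ 6`, `r ≥ 0` and `n-4 ≤ k ≤ n+r-4`, the ideal
`HS_k(I(ACH_{n,r}ᶜ))` does not have linear quotients. -/
theorem ACH_no_LQ (n r k : ℕ) (hn : 6 ≤ n) (hk1 : n - 4 ≤ k) (hk2 : k ≤ n + r - 4) :
    ¬ HasLQ (hsGens (ACHedge n r) (Finset.Icc 1 (r + n)) k) := by
  rintro ⟨L, hnd, hmem, hLQ⟩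
  set s := r + n - (k + 4) with hs
  clear_value s
  have hkn : n ≤ k + 4 := by omega
  have hkr : k + 4 ≤ n + r := by omega
  have hsr : s ≤ r := by omega
  set W := Finset.Icc (s + 1) (r + n) with hWdef
  set f := W \ {r + n - 2, r + n - 1} with hfdef
  set g := W \ {r + 2, r + n} with hgdef
  have hWcard : W.card = k + 4 := by rw [hWdef, Nat.card_Icc]; omega
  have hfW : f ⊆ W := sdiff_subset
  have hgW : g ⊆ W := sdiff_subset
  have hWV : W ⊆ Finset.Icc 1 (r + n) := by
    rw [hWdef]; exact Finset.Icc_subset_Icc (by omega) le_rfl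
  have hmemf : ∀ x, x ∈ f ↔ (s + 1 ≤ x ∧ x ≤ r + n ∧ x ≠ r + n - 2 ∧ x ≠ r + n - 1) := by
    intro x
    rw [hfdef, mem_sdiff, hWdef, mem_Icc]
    simp only [mem_insert, mem_singleton]
    tauto
  have hmemg : ∀ x, x ∈ g ↔ (s + 1 ≤ x ∧ x ≤ r + n ∧ x ≠ r + 2 ∧ x ≠ r + n) := by
    intro x
    rw [hgdef, mem_sdiff, hWdef, mem_Icc]
    simp only [mem_insert, mem_singleton]
    tauto
  have hfS : f ∈ hsGens (ACHedge n r) (Finset.Icc 1 (r + n)) k := by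
    refine ⟨hfW.trans hWV, ?_, r + n - 3, ?_, ⟨r + n, ?_, by omega⟩, ?_⟩
    · have hsub : ({r + n - 2, r + n - 1} : Finset ℕ) ⊆ W := by
        intro x hx
        simp only [mem_insert, mem_singleton] at hx
        rw [hWdef, mem_Icc]; omega
      rw [hfdef, card_sdiff_of_subset hsub, hWcard, card_pair (by omega)]; omega
    · rw [hmemf]; omega
    · rw [hmemf]; omega
    · intro l hl hlt
      rw [hmemf] at hl
      have hl' : l = r + n := by omega
      subst hl'
      exact nonadj_f n r hn
  have hgS : g ∈ hsGens (ACHedge n r) (Finset.Icc 1 (r + n)) k := by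
    refine ⟨hgW.trans hWV, ?_, r + 1, ?_, ⟨r + 3, ?_, by omega⟩, ?_⟩
    · have hsub : ({r + 2, r + n} : Finset ℕ) ⊆ W := by
        intro x hx
        simp only [mem_insert, mem_singleton] at hx
        rw [hWdef, mem_Icc]; omega
      rw [hgdef, card_sdiff_of_subset hsub, hWcard, card_pair (by omega)]; omega
    · rw [hmemg]; omega
    · rw [hmemg]; omega
    · intro l hl hlt
      rw [hmemg] at hl
      exact nonadj_g n r l hn (by omega) (by omega)
  have huniq : ∀ h ∈ hsGens (ACHedge n r) (Finset.Icc 1 (r + n)) k,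
      h ⊆ W → h = f ∨ h = g := by
    intro h hS hhW
    rw [hWdef, hs] at hhW
    rw [hfdef, hgdef, hWdef, hs]
    exact hchar n r k hn hkn hkr h hhW hS.2.1 hS.2.2
  have hfg : (f \ g).card = 2 := by
    have hd : f \ g = {r + 2, r + n} := by
      ext x
      simp only [mem_sdiff, hmemf, hmemg, mem_insert, mem_singleton]
      omega
    rw [hd, card_pair (by omega)]
  have hgf : (g \ f).card = 2 := by
    have hd : g \ f = {r + n - 2, r + n - 1} := by
      ext x
      simp only [mem_sdiff, hmemf, hmemg, mem_insert, mem_singleton]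
      omega
    rw [hd, card_pair (by omega)]
  have hne : f ≠ g := by
    intro he
    have h1 : r + n ∈ f := (hmemf _).mpr (by omega)
    rw [he, hmemg] at h1
    omega
  obtain ⟨i, hi⟩ := List.get_of_mem ((hmem f).mpr hfS)
  obtain ⟨j, hj⟩ := List.get_of_mem ((hmem g).mpr hgS)
  have hij : i ≠ j := by
    intro he; rw [he, hj] at hi; exact hne hi.symm
  rcases lt_or_gt_of_ne hij with hlt | hlt
  · exact LQ_step (hsGens (ACHedge n r) (Finset.Icc 1 (r + n)) k) W f g hfW hgW
      huniq hfg L hmem hLQ i j hlt hi hj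
  · exact LQ_step (hsGens (ACHedge n r) (Finset.Icc 1 (r + n)) k) W g f hgW hfW
      (fun h a b => (huniq h a b).symm) hgf L hmem hLQ j i hlt hj hi
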